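/- Let G be a finite group acting on a unital ℂ-algebra R, and H = ℂG. The map α: X_G(R)_G → X(R⋊G)_H given on degree-zero by α₀(f⊗x)(s) = f(s)x is a chain isomorphism in degree zero onto (R⋊G)/[R⋊G, H], with inverse β₀(x⋊f) = Σ_r f(r) ⊗ x; in particular α₀ is well-defined on G-coinvariants and β₀α₀ = id, α₀β₀ = id modulo commutators [R⋊G, H]. -/

import Mathlib

/-- The crossed product `R ⋊ G` of a unital algebra `R` by a finite group `G`, modelled as
functions `G → R` (the function `F` encodes `Σ_s F(s) ⋊ s`), has the convolution product
`(F * K)(t) = Σ_r F(r) · (r • K(r⁻¹ t))`. -/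
noncomputable def crossedConv {G : Type*} [Group G] [Fintype G]
    {R : Type*} [Ring R] [MulSemiringAction G R]
    (F K : G → R) : G → R :=
  fun t => ∑ r : G, F r * (r • K (r⁻¹ * t))

/-- The element `1 ⋊ t` of the crossed product, i.e. the image of `t ∈ G ⊆ H = ℂG`. -/
noncomputable def deltaCP {G : Type*} [Group G] [DecidableEq G]
    {R : Type*} [Ring R] (t : G) : G → R :=
  fun s => if s = t then 1 else 0

/-- Let `G` be a finite group acting on a unital ℂ-algebra `R`, and
`H = ℂG ⊆ R ⋊ G`.  Both `X_G⁰(R) = O_G ⊗ R` and `X⁰(R ⋊ G) = R ⋊ G` are modelled as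
`G → R` (an element `f ⊗ x` of `O_G ⊗ R` corresponds to the function `s ↦ f(s)x`, so
that the map `α₀(f ⊗ x)(s) = f(s)x` and its inverse `β₀(x ⋊ f) = Σ_r f(r) ⊗ x` are both
modelled by the identity map of `G → R`).  The claim that `α₀` is well defined on the
`G`-coinvariants `X_G⁰(R)_G`, is a chain isomorphism in degree zero onto
`(R⋊G)/[R⋊G, H]`, with inverse `β₀` (i.e. `β₀α₀ = id` and `α₀β₀ = id` modulo
commutators `[R⋊G, H]`) is then: the identity map descends to a ℂ-linear isomorphism
between the quotient of `G → R` by the `G`-coinvariance relations `t•F − F` (where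
`(t•F)(s) = t • F(t⁻¹ s t)` is the action combining the adjoint action on `O_G` with
the action on `R`) and the quotient of `G → R` by the commutators `[R⋊G, H]`. -/
lemma conv_delta_right {G : Type*} [Group G] [Fintype G] [DecidableEq G]
    {R : Type*} [Ring R] [MulSemiringAction G R] (K : G → R) (t : G) :
    crossedConv K (deltaCP t) = fun s => K (s * t⁻¹) := by
  funext s
  unfold crossedConv deltaCP
  have : ∀ r : G, K r * (r • if r⁻¹ * s = t then (1:R) else 0)
      = if r = s * t⁻¹ then K r else 0 := by
    intro r
    by_cases h : r⁻¹ * s = t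
    · have hr : r = s * t⁻¹ := by group; rw [← h]; group
      simp [h, hr]
    · have hr : r ≠ s * t⁻¹ := by
        intro hc; apply h; rw [hc]; group
      simp [h, hr]
  simp_rw [this]
  simp

lemma conv_delta_left {G : Type*} [Group G] [Fintype G] [DecidableEq G]
    {R : Type*} [Ring R] [MulSemiringAction G R] (K : G → R) (t : G) :
    crossedConv (deltaCP t) K = fun s => t • K (t⁻¹ * s) := by
  funext s
  unfold crossedConv deltaCP
  simp [ite_mul]

theorem degree_zero_coinvariants_iso_relative_X_complex
    {G : Type*} [Group G] [Fintype G] [DecidableEq G]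
    {R : Type*} [Ring R] [Algebra ℂ R] [MulSemiringAction G R]
    [SMulCommClass G ℂ R] :
    ∃ e : ((G → R) ⧸ (Submodule.span ℂ
            {F' : G → R | ∃ (t : G) (F : G → R),
              F' = (fun s => t • F (t⁻¹ * s * t)) - F})) ≃ₗ[ℂ]
          ((G → R) ⧸ (Submodule.span ℂ
            {F' : G → R | ∃ (t : G) (K : G → R),
              F' = crossedConv K (deltaCP t) - crossedConv (deltaCP t) K})),
      ∀ F : G → R,
        e (Submodule.Quotient.mk F) = Submodule.Quotient.mk F := by
  have hspan : (Submodule.span ℂ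
            {F' : G → R | ∃ (t : G) (F : G → R),
              F' = (fun s => t • F (t⁻¹ * s * t)) - F}) =
        (Submodule.span ℂ
            {F' : G → R | ∃ (t : G) (K : G → R),
              F' = crossedConv K (deltaCP t) - crossedConv (deltaCP t) K}) := by
    apply le_antisymm <;> rw [Submodule.span_le] <;> rintro F' ⟨t, K, rfl⟩
    · -- coinvariance gen ∈ span of commutators; take K'(s) = K (s*t)
      have hmem : (crossedConv (fun s => K (s * t)) (deltaCP t)
          - crossedConv (deltaCP t) (fun s => K (s * t))) ∈ Submodule.span ℂ
            {F' : G → R | ∃ (t : G) (K : G → R),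
              F' = crossedConv K (deltaCP t) - crossedConv (deltaCP t) K} :=
        Submodule.subset_span ⟨t, _, rfl⟩
      have := Submodule.neg_mem _ hmem
      rw [SetLike.mem_coe]
      convert this using 1
      rw [conv_delta_right, conv_delta_left]
      funext s
      simp only [Pi.sub_apply, Pi.neg_apply]
      have h1 : s * t⁻¹ * t = s := by group
      have h2 : t⁻¹ * s * t = t⁻¹ * (s * t) := by group
      rw [h1, h2, neg_sub]
    · -- commutator gen ∈ span of coinvariance; take F(s) = K (s*t⁻¹)
      have hmem : ((fun s => t • (fun u => K (u * t⁻¹)) (t⁻¹ * s * t))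
          - (fun u => K (u * t⁻¹))) ∈ Submodule.span ℂ
            {F' : G → R | ∃ (t : G) (F : G → R),
              F' = (fun s => t • F (t⁻¹ * s * t)) - F} :=
        Submodule.subset_span ⟨t, fun u => K (u * t⁻¹), rfl⟩
      have := Submodule.neg_mem _ hmem
      rw [SetLike.mem_coe]
      convert this using 1
      rw [conv_delta_right, conv_delta_left]
      funext s
      simp only [Pi.sub_apply, Pi.neg_apply]
      have h2 : t⁻¹ * s * t * t⁻¹ = t⁻¹ * s := by group
      rw [h2, neg_sub]
  exact ⟨Submodule.quotEquivOfEq _ _ hspan, fun F => rfl⟩
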